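/- For all integers n ≥ 0 and k ≥ 1, every sequence of real numbers ᾱ = (α₀, α₁, …, α_{n−1}) and all nonzero real numbers ℓ₁, …, ℓ_k, the multiparameter poly-Cauchy numbers of the second kind satisfy Ĉ_{n,L}^{(k)}(ᾱ) = Σ_{m=0}^{n} (−1)^n |s_ᾱ(n,m)| (ℓ₁ℓ₂⋯ℓ_k)^{m+1} / (m+1)^k. -/
import Mathlib


open Finset

/-- Iterated integral ∫₀^{ℓ₁}⋯∫₀^{ℓ_k} f(x₁x₂⋯x_k) dx₁⋯dx_k over the list of bounds. -/
noncomputable def iterInt : List ℝ → (ℝ → ℝ) → ℝ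
  | [], f => f 1
  | l :: ls, f => ∫ x in (0:ℝ)..l, iterInt ls (fun y => f (x * y))

lemma iterInt_poly (ls : List ℝ) (N : ℕ) (c : ℕ → ℝ) :
    iterInt ls (fun t => ∑ m ∈ range N, c m * t ^ m) =
      ∑ m ∈ range N, c m * ls.prod ^ (m + 1) / ((m : ℝ) + 1) ^ ls.length := by
  induction ls generalizing c with
  | nil => simp [iterInt]
  | cons l ls ih =>
    show (∫ x in (0:ℝ)..l, iterInt ls (fun y => ∑ m ∈ range N, c m * (x * y) ^ m)) = _
    have key : ∀ x : ℝ, iterInt ls (fun y => ∑ m ∈ range N, c m * (x * y) ^ m)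
        = ∑ m ∈ range N, (c m * x ^ m) * ls.prod ^ (m + 1) / ((m : ℝ) + 1) ^ ls.length := by
      intro x
      have : (fun y => ∑ m ∈ range N, c m * (x * y) ^ m)
          = fun y => ∑ m ∈ range N, (c m * x ^ m) * y ^ m := by
        funext y; apply sum_congr rfl; intro m _; ring
      rw [this, ih]
    calc (∫ x in (0:ℝ)..l, iterInt ls (fun y => ∑ m ∈ range N, c m * (x * y) ^ m))
        = ∫ x in (0:ℝ)..l,
            ∑ m ∈ range N, (c m * x ^ m) * ls.prod ^ (m + 1) / ((m : ℝ) + 1) ^ ls.length := by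
          congr 1; funext x; exact key x
      _ = ∑ m ∈ range N, ∫ x in (0:ℝ)..l,
            (c m * x ^ m) * ls.prod ^ (m + 1) / ((m : ℝ) + 1) ^ ls.length := by
          apply intervalIntegral.integral_finset_sum
          intro m _
          apply Continuous.intervalIntegrable
          continuity
      _ = _ := by
          apply sum_congr rfl; intro m _
          have h1 : (fun x : ℝ => (c m * x ^ m) * ls.prod ^ (m + 1) / ((m : ℝ) + 1) ^ ls.length)
              = fun x => (c m * ls.prod ^ (m + 1) / ((m : ℝ) + 1) ^ ls.length) * x ^ m := by
            funext x; ring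
          rw [h1, intervalIntegral.integral_const_mul, integral_pow]
          have hm : ((m : ℝ) + 1) ≠ 0 := by positivity
          simp only [List.prod_cons, List.length_cons]
          rw [zero_pow (Nat.succ_ne_zero m)]
          field_simp
          ring

theorem stmt6 (n k : ℕ) (hk : 1 ≤ k) (α : ℕ → ℝ) (L : Fin k → ℝ)
    (hL : ∀ i, L i ≠ 0) (sabs : ℕ → ℝ)
    (hsabs : ∀ x : ℝ, ∏ i ∈ range n, (x + α i) = ∑ m ∈ range (n + 1), sabs m * x ^ m) :
    iterInt (List.ofFn L) (fun t => ∏ i ∈ range n, (-t - α i)) =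
      ∑ m ∈ range (n + 1),
        (-1 : ℝ) ^ n * sabs m * (∏ i, L i) ^ (m + 1) / ((m : ℝ) + 1) ^ k := by
  have hf : (fun t : ℝ => ∏ i ∈ range n, (-t - α i))
      = fun t => ∑ m ∈ range (n + 1), ((-1 : ℝ) ^ n * sabs m) * t ^ m := by
    funext t
    have : ∏ i ∈ range n, (-t - α i) = (-1 : ℝ) ^ n * ∏ i ∈ range n, (t + α i) := by
      clear hsabs
      induction n with
      | zero => simp
      | succ n ih => rw [prod_range_succ, prod_range_succ, ih]; ring
    rw [this, hsabs t, Finset.mul_sum]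
    apply sum_congr rfl; intro m _; ring
  rw [hf, iterInt_poly]
  rw [List.length_ofFn, List.prod_ofFn]
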